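/- Let {ξ_j : j ∈ ℤ} be identically distributed, α ∈ (1,2], and suppose E(ξ₁²1{|ξ₁|≤x}) is regularly varying with index 2−α, b_n → ∞ with limsup_n n b_n^{−2}E(ξ₁²1{|ξ₁|≤b_n}) < ∞, and Σ_{k∈ℤ}|a_k| < ∞. Then for every δ > 0 and T > 0, limsup_{n→∞} P(max_{1≤l≤[nT]} |b_n^{−1} Σ_{j=1}^l Σ_{|k|>m} a_k ξ_{j−k} 1{|ξ_{j−k}| > b_n}| > δ) ≤ C · Σ_{|k|>m} |a_k| for a constant C independent of m; in particular this limsup tends to 0 as m → ∞. -/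

import Mathlib

open MeasureTheory Filter Set ProbabilityTheory
open scoped ENNReal

/-- `L` is slowly varying at infinity. -/
def SlowlyVarying (L : ℝ → ℝ) : Prop :=
  (∀ x > 0, 0 < L x) ∧ ∀ s > 0, Tendsto (fun x => L (s * x) / L x) atTop (nhds 1)

section Aux

variable {Ω : Type*} [MeasurableSpace Ω]

private lemma ofReal_abs_tsum_le' {ι : Type*} (g : ι → ℝ) :
    ENNReal.ofReal |∑' i, g i| ≤ ∑' i, ENNReal.ofReal |g i| := by
  by_cases h : Summable (fun i => |g i|)
  · have h2 : Summable (fun i => ‖g i‖) := by simpa [Real.norm_eq_abs] using h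
    have habs : |∑' i, g i| ≤ ∑' i, |g i| := by
      simpa [Real.norm_eq_abs] using norm_tsum_le_tsum_norm h2
    calc ENNReal.ofReal |∑' i, g i| ≤ ENNReal.ofReal (∑' i, |g i|) :=
        ENNReal.ofReal_le_ofReal habs
      _ = ∑' i, ENNReal.ofReal |g i| :=
        ENNReal.ofReal_tsum_of_nonneg (fun i => abs_nonneg _) h
  · have ht : ∑' i, ENNReal.ofReal |g i| = ⊤ := by
      by_contra hne
      exact h (by simpa [ENNReal.toReal_ofReal, abs_nonneg] using ENNReal.summable_toReal hne)
    simp [ht]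

private lemma doubling' {α : ℝ} (hα : α ∈ Set.Ioc (1:ℝ) 2) {ℓ : ℝ → ℝ} (hℓ : SlowlyVarying ℓ)
    {U : ℝ → ℝ}
    (hreg : Tendsto (fun x => U x / (x ^ (2 - α) * ℓ x)) atTop (nhds 1)) :
    ∃ ρ x₀ : ℝ, 0 < ρ ∧ ρ < 2 ∧ 1 ≤ x₀ ∧ ∀ y, x₀ ≤ y → U (2 * y) ≤ ρ * U y := by
  obtain ⟨hα1, hα2⟩ := hα
  set r : ℝ := (2:ℝ) ^ (2 - α) with hr
  have hr1 : 1 ≤ r := Real.one_le_rpow one_le_two (by linarith)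
  have hr2 : r < 2 := by
    calc r < (2:ℝ) ^ (1:ℝ) := Real.rpow_lt_rpow_of_exponent_lt one_lt_two (by linarith)
      _ = 2 := Real.rpow_one 2
  set ε : ℝ := (2 - r) / 8 with hεdef
  have hε : 0 < ε := by simp only [hεdef]; linarith
  have hε8 : ε ≤ 1 / 8 := by simp only [hεdef]; linarith
  have hε1 : ε < 1 := by linarith
  set ρ : ℝ := (1 + ε) ^ 2 / (1 - ε) * r with hρdef
  have h1ε : (0:ℝ) < 1 - ε := by linarith
  have hρpos : 0 < ρ := by
    apply mul_pos (div_pos (by nlinarith) h1ε) (by linarith)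
  have hreq : r = 2 - 8 * ε := by rw [hεdef]; ring
  have hρ2 : ρ < 2 := by
    rw [hρdef, div_mul_eq_mul_div, div_lt_iff₀ h1ε]
    nlinarith [hε, mul_pos hε hε, mul_pos (mul_pos hε hε) hε]
  have E1 : ∀ᶠ y in atTop, |U y / (y ^ (2 - α) * ℓ y) - 1| < ε := by
    have := Metric.tendsto_nhds.mp hreg ε hε
    simpa [Real.dist_eq] using this
  have h2y : Tendsto (fun y : ℝ => 2 * y) atTop atTop :=
    (tendsto_id (α := ℝ)).const_mul_atTop two_pos
  have E2 : ∀ᶠ y in atTop,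
      |U (2 * y) / ((2 * y) ^ (2 - α) * ℓ (2 * y)) - 1| < ε := h2y.eventually E1
  have E3 : ∀ᶠ y in atTop, |ℓ (2 * y) / ℓ y - 1| < ε := by
    have := Metric.tendsto_nhds.mp (hℓ.2 2 two_pos) ε hε
    simpa [Real.dist_eq] using this
  obtain ⟨x₁, hx₁⟩ := eventually_atTop.mp ((E1.and E2).and E3)
  refine ⟨ρ, max x₁ 1, hρpos, hρ2, le_max_right _ _, ?_⟩
  intro y hy
  have hy1 : 1 ≤ y := le_trans (le_max_right _ _) hy
  have hy0 : 0 < y := by linarith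
  have h2y0 : 0 < 2 * y := by linarith
  obtain ⟨⟨hE1, hE2⟩, hE3⟩ := hx₁ y (le_trans (le_max_left _ _) hy)
  have hLy : 0 < ℓ y := hℓ.1 y hy0
  have hL2y : 0 < ℓ (2 * y) := hℓ.1 _ h2y0
  have hA : 0 < y ^ (2 - α) := Real.rpow_pos_of_pos hy0 _
  have hA2 : (2 * y) ^ (2 - α) = r * y ^ (2 - α) := Real.mul_rpow two_pos.le hy0.le
  have hD : 0 < y ^ (2 - α) * ℓ y := mul_pos hA hLy
  have hD2 : 0 < (2 * y) ^ (2 - α) * ℓ (2 * y) := mul_pos (Real.rpow_pos_of_pos h2y0 _) hL2y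
  have hUupper : U (2 * y) ≤ (1 + ε) * ((2 * y) ^ (2 - α) * ℓ (2 * y)) := by
    have h' : U (2 * y) / ((2 * y) ^ (2 - α) * ℓ (2 * y)) < 1 + ε := by
      linarith [(abs_lt.mp hE2).2]
    rw [div_lt_iff₀ hD2] at h'
    nlinarith
  have hUlower : (1 - ε) * (y ^ (2 - α) * ℓ y) ≤ U y := by
    have h' : 1 - ε < U y / (y ^ (2 - α) * ℓ y) := by
      linarith [(abs_lt.mp hE1).1]
    rw [lt_div_iff₀ hD] at h'
    nlinarith
  have hℓupper : ℓ (2 * y) ≤ (1 + ε) * ℓ y := by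
    have h' : ℓ (2 * y) / ℓ y < 1 + ε := by linarith [(abs_lt.mp hE3).2]
    rw [div_lt_iff₀ hLy] at h'
    nlinarith
  calc U (2 * y) ≤ (1 + ε) * ((2 * y) ^ (2 - α) * ℓ (2 * y)) := hUupper
    _ = (1 + ε) * r * y ^ (2 - α) * ℓ (2 * y) := by rw [hA2]; ring
    _ ≤ (1 + ε) * r * y ^ (2 - α) * ((1 + ε) * ℓ y) := by
        apply mul_le_mul_of_nonneg_left hℓupper
        positivity
    _ = (1 + ε) ^ 2 * r * (y ^ (2 - α) * ℓ y) := by ring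
    _ ≤ (1 + ε) ^ 2 * r * (U y / (1 - ε)) := by
        apply mul_le_mul_of_nonneg_left _ (by positivity)
        rw [le_div_iff₀ h1ε]
        linarith [hUlower]
    _ = ρ * U y := by rw [hρdef]; ring

private lemma dyadic_decomp' (c : ℝ) (hc : 0 < c) (x : ℝ) :
    ENNReal.ofReal (if c < |x| then |x| else 0) ≤
      ∑' i : ℕ, ENNReal.ofReal
        (if 2 ^ i * c < |x| ∧ |x| ≤ 2 ^ (i + 1) * c then |x| else 0) := by
  by_cases hx : c < |x|
  · have hex : ∃ i : ℕ, |x| ≤ 2 ^ (i + 1) * c := by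
      obtain ⟨n, hn⟩ := pow_unbounded_of_one_lt (|x| / c) (one_lt_two (α := ℝ))
      rw [div_lt_iff₀ hc] at hn
      refine ⟨n, le_of_lt (lt_of_lt_of_le hn ?_)⟩
      have h2 : (2:ℝ) ^ n ≤ 2 ^ (n + 1) := by
        apply pow_le_pow_right₀ one_le_two (Nat.le_succ n)
      nlinarith
    have h1 : |x| ≤ 2 ^ (Nat.find hex + 1) * c := Nat.find_spec hex
    have h2 : 2 ^ (Nat.find hex) * c < |x| := by
      rcases Nat.eq_zero_or_pos (Nat.find hex) with h0 | hpos
      · rw [h0]; simpa using hx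
      · obtain ⟨i, hi⟩ := Nat.exists_eq_succ_of_ne_zero hpos.ne'
        have := Nat.find_min hex (by omega : i < Nat.find hex)
        push_neg at this
        rw [hi]
        exact this
    calc ENNReal.ofReal (if c < |x| then |x| else 0)
        = ENNReal.ofReal (if 2 ^ (Nat.find hex) * c < |x| ∧
            |x| ≤ 2 ^ (Nat.find hex + 1) * c then |x| else 0) := by
          rw [if_pos hx, if_pos ⟨h2, h1⟩]
      _ ≤ _ := ENNReal.le_tsum (Nat.find hex)
  · simp [hx]

private lemma ulin_eq' (μ : Measure Ω) [IsProbabilityMeasure μ] (X : Ω → ℝ) (hX : Measurable X)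
    (y : ℝ) :
    (∫⁻ ω, ENNReal.ofReal (if |X ω| ≤ y then X ω ^ 2 else 0) ∂μ)
      = ENNReal.ofReal (∫ ω, (if |X ω| ≤ y then X ω ^ 2 else 0) ∂μ) := by
  have hm : Measurable (fun ω => if |X ω| ≤ y then X ω ^ 2 else 0) :=
    Measurable.ite (measurableSet_le (hX.abs) measurable_const) (hX.pow_const 2) measurable_const
  have hint : Integrable (fun ω => if |X ω| ≤ y then X ω ^ 2 else 0) μ := by
    refine (integrable_const (y ^ 2)).mono' hm.aestronglyMeasurable ?_
    filter_upwards with ω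
    rw [Real.norm_eq_abs]
    by_cases h : |X ω| ≤ y
    · rw [if_pos h, abs_of_nonneg (sq_nonneg _)]
      calc X ω ^ 2 = |X ω| ^ 2 := (sq_abs _).symm
        _ ≤ y ^ 2 := by nlinarith [abs_nonneg (X ω)]
    · simp [h, sq_nonneg y]
  rw [MeasureTheory.ofReal_integral_eq_lintegral_ofReal hint]
  filter_upwards with ω
  by_cases h : |X ω| ≤ y <;> simp [h, sq_nonneg]

private lemma tail_lintegral_bound' (μ : Measure Ω) [IsProbabilityMeasure μ]
    (X : Ω → ℝ) (hX : Measurable X) (ρ x₀ : ℝ) (hρpos : 0 < ρ) (hρ2 : ρ < 2) (hx₀ : 1 ≤ x₀)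
    (hstep : ∀ y, x₀ ≤ y → (∫ ω, (if |X ω| ≤ 2 * y then X ω ^ 2 else 0) ∂μ)
      ≤ ρ * ∫ ω, (if |X ω| ≤ y then X ω ^ 2 else 0) ∂μ) :
    ∀ y, x₀ ≤ y → (∫⁻ ω, ENNReal.ofReal (if y < |X ω| then |X ω| else 0) ∂μ)
      ≤ ENNReal.ofReal ((ρ * (1 - ρ / 2)⁻¹ / y) *
          ∫ ω, (if |X ω| ≤ y then X ω ^ 2 else 0) ∂μ) := by
  intro y hy
  have hy1 : 1 ≤ y := le_trans hx₀ hy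
  have hy0 : 0 < y := lt_of_lt_of_le one_pos hy1
  have hρhalf : ρ / 2 < 1 := by linarith
  have hρhalf0 : 0 ≤ ρ / 2 := by linarith
  set V : ℝ → ℝ≥0∞ := fun z => ∫⁻ ω, ENNReal.ofReal (if |X ω| ≤ z then X ω ^ 2 else 0) ∂μ
    with hVdef
  have hVeq : ∀ z, V z = ENNReal.ofReal (∫ ω, (if |X ω| ≤ z then X ω ^ 2 else 0) ∂μ) :=
    fun z => ulin_eq' μ X hX z
  have hVstep : ∀ z, x₀ ≤ z → V (2 * z) ≤ ENNReal.ofReal ρ * V z := by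
    intro z hz
    rw [hVeq, hVeq, ← ENNReal.ofReal_mul hρpos.le]
    exact ENNReal.ofReal_le_ofReal (hstep z hz)
  have hVpow : ∀ i : ℕ, V (2 ^ (i + 1) * y) ≤ ENNReal.ofReal (ρ ^ (i + 1)) * V y := by
    intro i
    induction i with
    | zero => simpa [pow_one] using hVstep y hy
    | succ i ih =>
        have h2iy : x₀ ≤ 2 ^ (i + 1) * y := by
          refine le_trans hy (le_mul_of_one_le_left hy0.le ?_)
          exact one_le_pow₀ one_le_two
        have harg : (2:ℝ) ^ (i + 1 + 1) * y = 2 * (2 ^ (i + 1) * y) := by ring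
        calc V (2 ^ (i + 1 + 1) * y) = V (2 * (2 ^ (i + 1) * y)) := by rw [harg]
          _ ≤ ENNReal.ofReal ρ * V (2 ^ (i + 1) * y) := hVstep _ h2iy
          _ ≤ ENNReal.ofReal ρ * (ENNReal.ofReal (ρ ^ (i + 1)) * V y) :=
              mul_le_mul_right ih _
          _ = ENNReal.ofReal (ρ ^ (i + 1 + 1)) * V y := by
              rw [← mul_assoc, ← ENNReal.ofReal_mul hρpos.le, ← pow_succ']
  have hmf : ∀ i : ℕ, Measurable (fun ω =>
      ENNReal.ofReal (if 2 ^ i * y < |X ω| ∧ |X ω| ≤ 2 ^ (i + 1) * y then |X ω| else 0)) := by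
    intro i
    apply ENNReal.measurable_ofReal.comp
    exact Measurable.ite (hX.abs measurableSet_Ioc) hX.abs measurable_const
  have hmV : ∀ z : ℝ, Measurable (fun ω =>
      ENNReal.ofReal (if |X ω| ≤ z then X ω ^ 2 else 0)) := by
    intro z
    apply ENNReal.measurable_ofReal.comp
    exact Measurable.ite (measurableSet_le hX.abs measurable_const) (hX.pow_const 2)
      measurable_const
  have hterm : ∀ i : ℕ,
      (∫⁻ ω, ENNReal.ofReal (if 2 ^ i * y < |X ω| ∧ |X ω| ≤ 2 ^ (i + 1) * y
        then |X ω| else 0) ∂μ) ≤ ENNReal.ofReal ((ρ / y) * (ρ / 2) ^ i) * V y := by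
    intro i
    have hc : (0:ℝ) < 2 ^ i * y := by positivity
    have hpt : ∀ ω, ENNReal.ofReal (if 2 ^ i * y < |X ω| ∧ |X ω| ≤ 2 ^ (i + 1) * y
        then |X ω| else 0) ≤ ENNReal.ofReal ((2 ^ i * y)⁻¹) *
          ENNReal.ofReal (if |X ω| ≤ 2 ^ (i + 1) * y then X ω ^ 2 else 0) := by
      intro ω
      by_cases h : 2 ^ i * y < |X ω| ∧ |X ω| ≤ 2 ^ (i + 1) * y
      · rw [if_pos h, if_pos h.2, ← ENNReal.ofReal_mul (by positivity)]
        apply ENNReal.ofReal_le_ofReal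
        have hx2 : X ω ^ 2 = |X ω| * |X ω| := by rw [← sq_abs]; ring
        rw [hx2, le_inv_mul_iff₀ hc]
        nlinarith [h.1, abs_nonneg (X ω)]
      · rw [if_neg h]; simp
    calc (∫⁻ ω, ENNReal.ofReal (if 2 ^ i * y < |X ω| ∧ |X ω| ≤ 2 ^ (i + 1) * y
          then |X ω| else 0) ∂μ)
        ≤ ∫⁻ ω, ENNReal.ofReal ((2 ^ i * y)⁻¹) *
            ENNReal.ofReal (if |X ω| ≤ 2 ^ (i + 1) * y then X ω ^ 2 else 0) ∂μ :=
          lintegral_mono hpt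
      _ = ENNReal.ofReal ((2 ^ i * y)⁻¹) * V (2 ^ (i + 1) * y) :=
          lintegral_const_mul _ (hmV _)
      _ ≤ ENNReal.ofReal ((2 ^ i * y)⁻¹) * (ENNReal.ofReal (ρ ^ (i + 1)) * V y) :=
          mul_le_mul_right (hVpow i) _
      _ = ENNReal.ofReal ((2 ^ i * y)⁻¹ * ρ ^ (i + 1)) * V y := by
          rw [← mul_assoc, ← ENNReal.ofReal_mul (by positivity)]
      _ = ENNReal.ofReal ((ρ / y) * (ρ / 2) ^ i) * V y := by
          congr 1
          rw [div_pow]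
          field_simp
          ring_nf
  have hsummable : Summable (fun i : ℕ => (ρ / y) * (ρ / 2) ^ i) :=
    (summable_geometric_of_lt_one hρhalf0 hρhalf).mul_left _
  calc (∫⁻ ω, ENNReal.ofReal (if y < |X ω| then |X ω| else 0) ∂μ)
      ≤ ∫⁻ ω, ∑' i : ℕ, ENNReal.ofReal (if 2 ^ i * y < |X ω| ∧ |X ω| ≤ 2 ^ (i + 1) * y
          then |X ω| else 0) ∂μ := lintegral_mono (fun ω => dyadic_decomp' y hy0 (X ω))
    _ = ∑' i : ℕ, ∫⁻ ω, ENNReal.ofReal (if 2 ^ i * y < |X ω| ∧ |X ω| ≤ 2 ^ (i + 1) * y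
          then |X ω| else 0) ∂μ := lintegral_tsum (fun i => (hmf i).aemeasurable)
    _ ≤ ∑' i : ℕ, ENNReal.ofReal ((ρ / y) * (ρ / 2) ^ i) * V y := ENNReal.tsum_le_tsum hterm
    _ = (∑' i : ℕ, ENNReal.ofReal ((ρ / y) * (ρ / 2) ^ i)) * V y := ENNReal.tsum_mul_right
    _ = ENNReal.ofReal (∑' i : ℕ, (ρ / y) * (ρ / 2) ^ i) * V y := by
        rw [ENNReal.ofReal_tsum_of_nonneg (fun i => by positivity) hsummable]
    _ = ENNReal.ofReal (ρ * (1 - ρ / 2)⁻¹ / y) * V y := by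
        rw [tsum_mul_left, tsum_geometric_of_lt_one hρhalf0 hρhalf]
        congr 1
        ring
    _ = ENNReal.ofReal ((ρ * (1 - ρ / 2)⁻¹ / y) *
          ∫ ω, (if |X ω| ≤ y then X ω ^ 2 else 0) ∂μ) := by
        have h12 : (0:ℝ) < 1 - ρ / 2 := by linarith
        rw [hVeq y, ← ENNReal.ofReal_mul (by positivity)]

private lemma tail_sum_tendsto' (a : ℤ → ℝ) :
    Tendsto (fun m : ℕ => ∑' k : {k : ℤ // (m : ℤ) < |k|}, |a k|) atTop (nhds 0) := by
  have h1 := tendsto_tsum_compl_atTop_zero (fun k : ℤ => |a k|)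
  have h2 : Tendsto (fun m : ℕ => Finset.Icc (-(m:ℤ)) (m:ℤ)) atTop atTop := by
    apply tendsto_atTop.mpr
    intro s
    rw [eventually_atTop]
    refine ⟨s.sup (fun k => k.natAbs), fun m hm => ?_⟩
    rw [Finset.le_iff_subset]
    intro k hk
    have hle : k.natAbs ≤ m := le_trans (Finset.le_sup (f := fun k : ℤ => k.natAbs) hk) hm
    rw [Finset.mem_Icc]
    omega
  have h3 := h1.comp h2
  convert h3 using 2 with m
  have he : ∀ k : ℤ, (m : ℤ) < |k| ↔ k ∉ Finset.Icc (-(m:ℤ)) (m:ℤ) := by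
    intro k
    rw [Finset.mem_Icc]
    rw [Int.abs_eq_natAbs]
    omega
  exact (Equiv.subtypeEquivRight he).tsum_eq
    (fun k : {k : ℤ // k ∉ Finset.Icc (-(m:ℤ)) (m:ℤ)} => |a k|)

end Aux

set_option maxHeartbeats 2000000 in
/-- For identically distributed `ξ_j` with truncated second moment regularly varying of index
`2-α`, `α ∈ (1,2]`, and summable coefficients, the maximal tail-part probabilities satisfy
`limsup_n P(max_{1≤l≤⌊nT⌋} |b_n^{-1} Σ_{j=1}^l Σ_{|k|>m} a_k ξ_{j-k} 1{|ξ_{j-k}|>b_n}| > δ)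
≤ C Σ_{|k|>m}|a_k|`, with `C` independent of `m`; in particular the limsup tends to `0`. -/
theorem tail_part_negligible_alpha_gt_one
    {Ω : Type*} [MeasurableSpace Ω] (μ : Measure Ω) [IsProbabilityMeasure μ]
    (ξ : ℤ → Ω → ℝ) (hmeas : ∀ j, Measurable (ξ j))
    (hid : ∀ j : ℤ, IdentDistrib (ξ j) (ξ 1) μ μ)
    (α : ℝ) (hα : α ∈ Set.Ioc (1:ℝ) 2) (ℓ : ℝ → ℝ) (hℓ : SlowlyVarying ℓ)
    (hreg : Tendsto
      (fun x => (∫ ω, (if |ξ 1 ω| ≤ x then (ξ 1 ω) ^ 2 else 0) ∂μ) / (x ^ (2 - α) * ℓ x))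
      atTop (nhds 1))
    (b : ℕ → ℝ) (hbpos : ∀ n, 0 < b n) (hb : Tendsto b atTop atTop)
    (hbound : IsBoundedUnder (· ≤ ·) atTop
      (fun n : ℕ => (n : ℝ) * (b n) ^ (-(2:ℝ)) *
        ∫ ω, (if |ξ 1 ω| ≤ b n then (ξ 1 ω) ^ 2 else 0) ∂μ))
    (a : ℤ → ℝ) (ha : Summable (fun k : ℤ => |a k|)) :
    ∀ δ : ℝ, 0 < δ → ∀ T : ℝ, 0 < T → ∃ C : ℝ,
      (∀ m : ℕ,
        Filter.limsup (fun n : ℕ =>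
          (μ {ω | ∃ l, 1 ≤ l ∧ l ≤ ⌊(n : ℝ) * T⌋₊ ∧
            δ < |(b n)⁻¹ * ∑ j ∈ Finset.Icc 1 l, ∑' k : {k : ℤ // (m : ℤ) < |k|},
              a k * (if b n < |ξ ((j : ℤ) - k) ω| then ξ ((j : ℤ) - k) ω else 0)|}).toReal)
          atTop ≤ C * ∑' k : {k : ℤ // (m : ℤ) < |k|}, |a k|) ∧
      Tendsto (fun m : ℕ =>
        Filter.limsup (fun n : ℕ =>
          (μ {ω | ∃ l, 1 ≤ l ∧ l ≤ ⌊(n : ℝ) * T⌋₊ ∧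
            δ < |(b n)⁻¹ * ∑ j ∈ Finset.Icc 1 l, ∑' k : {k : ℤ // (m : ℤ) < |k|},
              a k * (if b n < |ξ ((j : ℤ) - k) ω| then ξ ((j : ℤ) - k) ω else 0)|}).toReal)
          atTop) atTop (nhds 0) := by
  intro δ hδ T hT
  classical
  -- notation
  set U : ℝ → ℝ := fun y => ∫ ω, (if |ξ 1 ω| ≤ y then (ξ 1 ω) ^ 2 else 0) ∂μ with hUdef
  set G : ℝ → ℝ≥0∞ := fun c => ∫⁻ ω, ENNReal.ofReal (if c < |ξ 1 ω| then |ξ 1 ω| else 0) ∂μ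
    with hGdef
  set S : ℕ → ℝ := fun m => ∑' k : {k : ℤ // (m : ℤ) < |k|}, |a k| with hSdef
  have hSnonneg : ∀ m, 0 ≤ S m := fun m => tsum_nonneg (fun k => abs_nonneg _)
  have hSsum : ∀ m : ℕ, Summable (fun k : {k : ℤ // (m : ℤ) < |k|} => |a (k:ℤ)|) :=
    fun m => ha.subtype _
  have hU0 : ∀ y, 0 ≤ U y := by
    intro y
    apply integral_nonneg
    intro ω
    by_cases h : |ξ 1 ω| ≤ y <;> simp [h, sq_nonneg]
  -- Karamata-type bound
  obtain ⟨ρ, x₀, hρpos, hρ2, hx₀, hdbl⟩ := doubling' hα hℓ hreg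
  have h12 : (0:ℝ) < 1 - ρ / 2 := by linarith
  set C₁ : ℝ := ρ * (1 - ρ / 2)⁻¹ with hC₁def
  have hC₁ : 0 ≤ C₁ := by positivity
  have htail : ∀ y, x₀ ≤ y → G y ≤ ENNReal.ofReal (C₁ / y * U y) :=
    tail_lintegral_bound' μ (ξ 1) (hmeas 1) ρ x₀ hρpos hρ2 hx₀ hdbl
  -- the bound from hbound
  obtain ⟨B, hB0⟩ := hbound
  rw [eventually_map] at hB0
  set B' : ℝ := max B 0 with hB'def
  have hB'0 : 0 ≤ B' := le_max_right _ _
  set C : ℝ := δ⁻¹ * T * C₁ * B' with hCdef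
  have hC : 0 ≤ C := by positivity
  -- the key eventual bound
  have key : ∀ m : ℕ, ∀ᶠ n : ℕ in atTop,
      (μ {ω | ∃ l, 1 ≤ l ∧ l ≤ ⌊(n : ℝ) * T⌋₊ ∧
        δ < |(b n)⁻¹ * ∑ j ∈ Finset.Icc 1 l, ∑' k : {k : ℤ // (m : ℤ) < |k|},
          a k * (if b n < |ξ ((j : ℤ) - k) ω| then ξ ((j : ℤ) - k) ω else 0)|}).toReal
        ≤ C * S m := by
    intro m
    filter_upwards [hb.eventually_ge_atTop x₀, hB0] with n hbn hBn
    set c : ℝ := b n with hcdef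
    have hc : 0 < c := hbpos n
    set N : ℕ := ⌊(n : ℝ) * T⌋₊ with hNdef
    -- measurability of the summands
    have hmterm : ∀ (j : ℕ) (k : {k : ℤ // (m : ℤ) < |k|}), Measurable (fun ω =>
        ENNReal.ofReal |a (k:ℤ) * (if c < |ξ ((j : ℤ) - (k:ℤ)) ω|
          then ξ ((j : ℤ) - (k:ℤ)) ω else 0)|) := by
      intro j k
      apply ENNReal.measurable_ofReal.comp
      apply Measurable.abs
      apply Measurable.const_mul
      exact Measurable.ite ((hmeas _).abs measurableSet_Ioi) (hmeas _) measurable_const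
    set F : Ω → ℝ≥0∞ := fun ω => ∑ j ∈ Finset.Icc 1 N, ∑' k : {k : ℤ // (m : ℤ) < |k|},
      ENNReal.ofReal |a (k:ℤ) * (if c < |ξ ((j : ℤ) - (k:ℤ)) ω|
        then ξ ((j : ℤ) - (k:ℤ)) ω else 0)| with hFdef
    have hFmeas : Measurable F :=
      Finset.measurable_sum _ (fun j _ => Measurable.ennreal_tsum (fun k => hmterm j k))
    -- event inclusion
    have hsub : {ω | ∃ l, 1 ≤ l ∧ l ≤ N ∧
        δ < |c⁻¹ * ∑ j ∈ Finset.Icc 1 l, ∑' k : {k : ℤ // (m : ℤ) < |k|},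
          a k * (if c < |ξ ((j : ℤ) - k) ω| then ξ ((j : ℤ) - k) ω else 0)|}
        ⊆ {ω | ENNReal.ofReal (δ * c) ≤ F ω} := by
      rintro ω ⟨l, hl1, hlN, hgt⟩
      have habs : |c⁻¹ * ∑ j ∈ Finset.Icc 1 l, ∑' k : {k : ℤ // (m : ℤ) < |k|},
          a k * (if c < |ξ ((j : ℤ) - k) ω| then ξ ((j : ℤ) - k) ω else 0)|
          = c⁻¹ * |∑ j ∈ Finset.Icc 1 l, ∑' k : {k : ℤ // (m : ℤ) < |k|},
          a k * (if c < |ξ ((j : ℤ) - k) ω| then ξ ((j : ℤ) - k) ω else 0)| := by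
        rw [abs_mul, abs_of_pos (inv_pos.mpr hc)]
      rw [habs, lt_inv_mul_iff₀ hc] at hgt
      show ENNReal.ofReal (δ * c) ≤ F ω
      calc ENNReal.ofReal (δ * c)
          ≤ ENNReal.ofReal |∑ j ∈ Finset.Icc 1 l, ∑' k : {k : ℤ // (m : ℤ) < |k|},
              a k * (if c < |ξ ((j : ℤ) - k) ω| then ξ ((j : ℤ) - k) ω else 0)| :=
            ENNReal.ofReal_le_ofReal (by rw [mul_comm] at hgt; exact hgt.le)
        _ ≤ ENNReal.ofReal (∑ j ∈ Finset.Icc 1 l, |∑' k : {k : ℤ // (m : ℤ) < |k|},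
              a k * (if c < |ξ ((j : ℤ) - k) ω| then ξ ((j : ℤ) - k) ω else 0)|) :=
            ENNReal.ofReal_le_ofReal (Finset.abs_sum_le_sum_abs _ _)
        _ = ∑ j ∈ Finset.Icc 1 l, ENNReal.ofReal |∑' k : {k : ℤ // (m : ℤ) < |k|},
              a k * (if c < |ξ ((j : ℤ) - k) ω| then ξ ((j : ℤ) - k) ω else 0)| :=
            ENNReal.ofReal_sum_of_nonneg (fun _ _ => abs_nonneg _)
        _ ≤ ∑ j ∈ Finset.Icc 1 l, ∑' k : {k : ℤ // (m : ℤ) < |k|},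
              ENNReal.ofReal |a (k:ℤ) * (if c < |ξ ((j : ℤ) - (k:ℤ)) ω|
                then ξ ((j : ℤ) - (k:ℤ)) ω else 0)| :=
            Finset.sum_le_sum (fun j _ => ofReal_abs_tsum_le' _)
        _ ≤ F ω := Finset.sum_le_sum_of_subset (Finset.Icc_subset_Icc_right hlN)
    -- Markov inequality
    have hmark := mul_meas_ge_le_lintegral₀ (μ := μ) hFmeas.aemeasurable (ENNReal.ofReal (δ * c))
    have hδc0 : ENNReal.ofReal (δ * c) ≠ 0 := (ENNReal.ofReal_pos.mpr (mul_pos hδ hc)).ne'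
    have hμE : μ {ω | ∃ l, 1 ≤ l ∧ l ≤ N ∧
        δ < |c⁻¹ * ∑ j ∈ Finset.Icc 1 l, ∑' k : {k : ℤ // (m : ℤ) < |k|},
          a k * (if c < |ξ ((j : ℤ) - k) ω| then ξ ((j : ℤ) - k) ω else 0)|}
        ≤ (∫⁻ ω, F ω ∂μ) / ENNReal.ofReal (δ * c) := by
      refine le_trans (measure_mono hsub) ?_
      rw [ENNReal.le_div_iff_mul_le (Or.inl hδc0) (Or.inl ENNReal.ofReal_ne_top)]
      rw [mul_comm]
      exact hmark
    -- computation of the integral of F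
    have hφmeas : Measurable (fun x : ℝ => ENNReal.ofReal (if c < |x| then |x| else 0)) := by
      apply ENNReal.measurable_ofReal.comp
      exact Measurable.ite (measurable_abs measurableSet_Ioi) measurable_abs measurable_const
    have hint : (∫⁻ ω, F ω ∂μ) = (N : ℝ≥0∞) * (ENNReal.ofReal (S m) * G c) := by
      rw [hFdef]
      rw [lintegral_finset_sum _ (fun j _ => Measurable.ennreal_tsum (fun k => hmterm j k))]
      have hj : ∀ j ∈ Finset.Icc 1 N,
          (∫⁻ ω, ∑' k : {k : ℤ // (m : ℤ) < |k|},
            ENNReal.ofReal |a (k:ℤ) * (if c < |ξ ((j : ℤ) - (k:ℤ)) ω|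
              then ξ ((j : ℤ) - (k:ℤ)) ω else 0)| ∂μ) = ENNReal.ofReal (S m) * G c := by
        intro j _
        rw [lintegral_tsum (fun k => (hmterm j k).aemeasurable)]
        have hk : ∀ k : {k : ℤ // (m : ℤ) < |k|},
            (∫⁻ ω, ENNReal.ofReal |a (k:ℤ) * (if c < |ξ ((j : ℤ) - (k:ℤ)) ω|
              then ξ ((j : ℤ) - (k:ℤ)) ω else 0)| ∂μ) = ENNReal.ofReal |a (k:ℤ)| * G c := by
          intro k
          have hptw : ∀ ω, ENNReal.ofReal |a (k:ℤ) * (if c < |ξ ((j : ℤ) - (k:ℤ)) ω|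
              then ξ ((j : ℤ) - (k:ℤ)) ω else 0)| = ENNReal.ofReal |a (k:ℤ)| *
                ENNReal.ofReal (if c < |ξ ((j : ℤ) - (k:ℤ)) ω|
                  then |ξ ((j : ℤ) - (k:ℤ)) ω| else 0) := by
            intro ω
            rw [abs_mul, ENNReal.ofReal_mul (abs_nonneg _)]
            congr 1
            by_cases h : c < |ξ ((j : ℤ) - (k:ℤ)) ω| <;> simp [h]
          simp_rw [hptw]
          have hmg : Measurable (fun ω => ENNReal.ofReal (if c < |ξ ((j : ℤ) - (k:ℤ)) ω|
              then |ξ ((j : ℤ) - (k:ℤ)) ω| else 0)) := hφmeas.comp (hmeas ((j : ℤ) - (k:ℤ)))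
          rw [lintegral_const_mul _ hmg]
          congr 1
          calc (∫⁻ ω, ENNReal.ofReal (if c < |ξ ((j : ℤ) - (k:ℤ)) ω|
                then |ξ ((j : ℤ) - (k:ℤ)) ω| else 0) ∂μ)
              = ∫⁻ x, ENNReal.ofReal (if c < |x| then |x| else 0)
                  ∂(μ.map (ξ ((j : ℤ) - (k:ℤ)))) :=
                (lintegral_map hφmeas (hmeas _)).symm
            _ = ∫⁻ x, ENNReal.ofReal (if c < |x| then |x| else 0) ∂(μ.map (ξ 1)) := by
                rw [(hid ((j : ℤ) - (k:ℤ))).map_eq]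
            _ = G c := lintegral_map hφmeas (hmeas 1)
        rw [tsum_congr hk, ENNReal.tsum_mul_right]
        congr 1
        rw [hSdef]
        exact (ENNReal.ofReal_tsum_of_nonneg (fun _ => abs_nonneg _) (hSsum m)).symm
      rw [Finset.sum_congr rfl hj, Finset.sum_const, Nat.card_Icc]
      simp [nsmul_eq_mul]
    -- assembling
    have hNle : ((N : ℝ≥0∞)) ≤ ENNReal.ofReal ((n : ℝ) * T) := by
      rw [← ENNReal.ofReal_natCast]
      exact ENNReal.ofReal_le_ofReal (Nat.floor_le (by positivity))
    have hGc : G c ≤ ENNReal.ofReal (C₁ / c * U c) := htail c hbn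
    have hchain : μ {ω | ∃ l, 1 ≤ l ∧ l ≤ N ∧
        δ < |c⁻¹ * ∑ j ∈ Finset.Icc 1 l, ∑' k : {k : ℤ // (m : ℤ) < |k|},
          a k * (if c < |ξ ((j : ℤ) - k) ω| then ξ ((j : ℤ) - k) ω else 0)|}
        ≤ ENNReal.ofReal (((n : ℝ) * T) * (S m * (C₁ / c * U c)) / (δ * c)) := by
      refine le_trans hμE ?_
      rw [hint]
      have h1 : (N : ℝ≥0∞) * (ENNReal.ofReal (S m) * G c)
          ≤ ENNReal.ofReal ((n : ℝ) * T) * (ENNReal.ofReal (S m)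
            * ENNReal.ofReal (C₁ / c * U c)) :=
        mul_le_mul' hNle (mul_le_mul' le_rfl hGc)
      refine le_trans (ENNReal.div_le_div_right h1 _) ?_
      have hnn1 : 0 ≤ C₁ / c * U c := mul_nonneg (div_nonneg hC₁ hc.le) (hU0 c)
      have hnn2 : 0 ≤ S m * (C₁ / c * U c) := mul_nonneg (hSnonneg m) hnn1
      rw [← ENNReal.ofReal_mul (hSnonneg m),
        ← ENNReal.ofReal_mul (by positivity : (0:ℝ) ≤ (n : ℝ) * T),
        ← ENNReal.ofReal_div_of_pos (mul_pos hδ hc)]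
    -- real-number estimate
    have hreal : ((n : ℝ) * T) * (S m * (C₁ / c * U c)) / (δ * c) ≤ C * S m := by
      have hcpow : c ^ (-(2:ℝ)) = (c * c)⁻¹ := by
        rw [Real.rpow_neg hc.le]
        congr 1
        rw [show (2:ℝ) = ((2:ℕ) : ℝ) by norm_num, Real.rpow_natCast]
        ring
      have hrw : ((n : ℝ) * T) * (S m * (C₁ / c * U c)) / (δ * c)
          = (δ⁻¹ * T * C₁ * S m) * ((n : ℝ) * c ^ (-(2:ℝ)) * U c) := by
        rw [hcpow]
        field_simp
      rw [hrw, hCdef]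
      have hBn' : (n : ℝ) * c ^ (-(2:ℝ)) * U c ≤ B' := le_trans hBn (le_max_left _ _)
      calc (δ⁻¹ * T * C₁ * S m) * ((n : ℝ) * c ^ (-(2:ℝ)) * U c)
          ≤ (δ⁻¹ * T * C₁ * S m) * B' := by
            apply mul_le_mul_of_nonneg_left hBn'
            exact mul_nonneg (mul_nonneg (mul_nonneg (inv_nonneg.mpr hδ.le) hT.le) hC₁)
              (hSnonneg m)
        _ = δ⁻¹ * T * C₁ * B' * S m := by ring
    exact ENNReal.toReal_le_of_le_ofReal (mul_nonneg hC (hSnonneg m))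
      (le_trans hchain (ENNReal.ofReal_le_ofReal hreal))
  -- limsup bounds
  have hcobdd : ∀ m : ℕ, IsCoboundedUnder (· ≤ ·) atTop (fun n : ℕ =>
      (μ {ω | ∃ l, 1 ≤ l ∧ l ≤ ⌊(n : ℝ) * T⌋₊ ∧
        δ < |(b n)⁻¹ * ∑ j ∈ Finset.Icc 1 l, ∑' k : {k : ℤ // (m : ℤ) < |k|},
          a k * (if b n < |ξ ((j : ℤ) - k) ω| then ξ ((j : ℤ) - k) ω else 0)|}).toReal) :=
    fun m => isCoboundedUnder_le_of_le atTop (x := 0) (fun n => ENNReal.toReal_nonneg)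
  have part1 : ∀ m : ℕ,
      Filter.limsup (fun n : ℕ =>
        (μ {ω | ∃ l, 1 ≤ l ∧ l ≤ ⌊(n : ℝ) * T⌋₊ ∧
          δ < |(b n)⁻¹ * ∑ j ∈ Finset.Icc 1 l, ∑' k : {k : ℤ // (m : ℤ) < |k|},
            a k * (if b n < |ξ ((j : ℤ) - k) ω| then ξ ((j : ℤ) - k) ω else 0)|}).toReal)
        atTop ≤ C * S m :=
    fun m => Filter.limsup_le_of_le (hcobdd m) (key m)
  refine ⟨C, fun m => part1 m, ?_⟩
  -- squeeze to zero
  have hbdd : ∀ m : ℕ, IsBoundedUnder (· ≤ ·) atTop (fun n : ℕ =>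
      (μ {ω | ∃ l, 1 ≤ l ∧ l ≤ ⌊(n : ℝ) * T⌋₊ ∧
        δ < |(b n)⁻¹ * ∑ j ∈ Finset.Icc 1 l, ∑' k : {k : ℤ // (m : ℤ) < |k|},
          a k * (if b n < |ξ ((j : ℤ) - k) ω| then ξ ((j : ℤ) - k) ω else 0)|}).toReal) := by
    intro m
    refine ⟨1, eventually_map.mpr (Eventually.of_forall (fun n => ?_))⟩
    exact ENNReal.toReal_le_of_le_ofReal zero_le_one (by simpa using prob_le_one)
  have hL0 : ∀ m : ℕ, 0 ≤ Filter.limsup (fun n : ℕ =>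
      (μ {ω | ∃ l, 1 ≤ l ∧ l ≤ ⌊(n : ℝ) * T⌋₊ ∧
        δ < |(b n)⁻¹ * ∑ j ∈ Finset.Icc 1 l, ∑' k : {k : ℤ // (m : ℤ) < |k|},
          a k * (if b n < |ξ ((j : ℤ) - k) ω| then ξ ((j : ℤ) - k) ω else 0)|}).toReal) atTop :=
    fun m => le_limsup_of_frequently_le (a := (0:ℝ))
      (Frequently.of_forall (fun n => ENNReal.toReal_nonneg)) (hbdd m)
  have hCS : Tendsto (fun m : ℕ => C * S m) atTop (nhds 0) := by
    have := (tail_sum_tendsto' a).const_mul C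
    simpa using this
  exact squeeze_zero hL0 part1 hCS
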